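/- Let 𝒜 be a Hom-finite Krull-Schmidt triangulated k-category and X an indecomposable object of 𝒜. Then X is a d-th Calabi-Yau object if and only if there exists an Auslander-Reiten triangle of the form X[d−1] → Y → X → X[d]. -/

import Mathlib

open CategoryTheory CategoryTheory.Limits CategoryTheory.Pretriangulated

universe v u

namespace CYPaper

variable (k : Type u) [Field k]
variable (C : Type u) [Category.{v} C] [Preadditive C] [Linear k C]
  [HasZeroObject C] [HasShift C ℤ] [∀ n : ℤ, (shiftFunctor C n).Additive]
  [Pretriangulated C]

/-- `X` is a `d`-th Calabi-Yau object: there is an isomorphism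
`Hom(X,-) ≅ D Hom(-, X⟦d⟧)`, natural in the variable. -/
def IsCYObj (d : ℤ) (X : C) : Prop :=
  ¬ IsZero X ∧
    ∃ η : ∀ Z : C, (X ⟶ Z) ≃ₗ[k] Module.Dual k (Z ⟶ X⟦d⟧),
      ∀ {Z W : C} (f : Z ⟶ W) (u : X ⟶ Z) (w : W ⟶ X⟦d⟧),
        η W (u ≫ f) w = η Z u (f ≫ w)

variable {C}

/-- A biproduct decomposition `X ≅ A ⊕ B`, expressed without assuming
the existence of biproducts. -/
def IsDecomp (X A B : C) : Prop :=
  ∃ (iA : A ⟶ X) (iB : B ⟶ X) (pA : X ⟶ A) (pB : X ⟶ B),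
    iA ≫ pA = 𝟙 A ∧ iB ≫ pB = 𝟙 B ∧ iA ≫ pB = 0 ∧ iB ≫ pA = 0 ∧
      pA ≫ iA + pB ≫ iB = 𝟙 X

/-- A direct sum decomposition `X ≅ X₁ ⊕ ⋯ ⊕ X_r`. -/
def IsDirectSumDecomp (X : C) {r : ℕ} (Xs : Fin r → C) : Prop :=
  ∃ (ι : ∀ j, Xs j ⟶ X) (π : ∀ j, X ⟶ Xs j),
    (∀ j, ι j ≫ π j = 𝟙 (Xs j)) ∧ (∀ j j', j ≠ j' → ι j ≫ π j' = 0) ∧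
      (∑ j, π j ≫ ι j) = 𝟙 X

/-- An object is indecomposable if it is non-zero and admits no non-trivial
direct sum decomposition. -/
def Indec (X : C) : Prop :=
  ¬ IsZero X ∧ ∀ A B : C, IsDecomp X A B → IsZero A ∨ IsZero B

variable (C) in
/-- The category is Krull-Schmidt: Hom-finite and any indecomposable object has
local endomorphism ring. -/
def KrullSchmidt : Prop :=
  ∀ X : C, Indec X → IsLocalRing (End X)

/-- Auslander-Reiten triangle. -/
def IsARTriangle (T : Triangle C) : Prop :=
  (T ∈ distTriang C) ∧ Indec T.obj₁ ∧ Indec T.obj₃ ∧ T.mor₃ ≠ 0 ∧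
    ∀ (Z' : C) (t : Z' ⟶ T.obj₃),
      (¬ ∃ s : T.obj₃ ⟶ Z', s ≫ t = 𝟙 T.obj₃) → ∃ t' : Z' ⟶ T.obj₂, t = t' ≫ T.mor₂

variable (C) in
/-- A right Serre functor on a Hom-finite `k`-linear category. -/
structure RightSerre where
  F : C ⥤ C
  additive : F.Additive
  linear : F.Linear k
  η : ∀ A B : C, (A ⟶ B) ≃ₗ[k] Module.Dual k (B ⟶ F.obj A)
  nat_right : ∀ {A B B' : C} (g : B ⟶ B') (u : A ⟶ B) (w : B' ⟶ F.obj A),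
    η A B' (u ≫ g) w = η A B u (g ≫ w)
  nat_left : ∀ {A A' B : C} (f : A' ⟶ A) (u : A ⟶ B) (w : B ⟶ F.obj A'),
    η A' B (f ≫ u) w = η A B u (w ≫ F.map f)

variable (C) in
/-- A Serre functor: a right Serre functor which is an equivalence. -/
structure Serre extends RightSerre k C where
  isEquiv : F.IsEquivalence

/-- A minimal `d`-th Calabi-Yau object: a `d`-th CY object no proper direct
summand of which is a `d`-th CY object. -/
def IsMinCYObj (d : ℤ) (X : C) : Prop :=
  IsCYObj k C d X ∧
    ∀ A B : C, IsDecomp X A B → ¬ IsZero B → ¬ IsCYObj k C d A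

end CYPaper

open CategoryTheory CategoryTheory.Limits CategoryTheory.Pretriangulated CYPaper

section AuxLemmas

set_option linter.unusedSectionVars false

variable {C : Type u} [Category.{v} C] [Preadditive C]
  [HasZeroObject C] [HasShift C ℤ] [∀ n : ℤ, (shiftFunctor C n).Additive]
  [Pretriangulated C]

/-- Characterization of units in `End X` as two-sided invertible morphisms. -/
lemma isUnit_end_iff {X : C} (e : End X) :
    IsUnit e ↔ ∃ v : X ⟶ X, e ≫ v = 𝟙 X ∧ v ≫ e = 𝟙 X := by
  constructor
  · rintro ⟨u, rfl⟩
    exact ⟨u.inv, u.inv_val, u.val_inv⟩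
  · rintro ⟨v, h1, h2⟩
    exact ⟨⟨e, v, h2, h1⟩, rfl⟩

lemma isZero_of_isZero_shift {X : C} (n : ℤ) (h : IsZero ((X : C)⟦n⟧)) : IsZero X := by
  rw [IsZero.iff_id_eq_zero] at h ⊢
  have h2 : (𝟙 (((X : C)⟦n⟧)⟦-n⟧) : _) = 0 := by
    rw [← (shiftFunctor C (-n)).map_id, h, Functor.map_zero]
  have e := (shiftFunctorCompIsoId C n (-n) (add_neg_cancel n)).app X
  calc 𝟙 X = e.inv ≫ 𝟙 (((X : C)⟦n⟧)⟦-n⟧) ≫ e.hom := by simp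
  _ = 0 := by rw [h2, zero_comp, comp_zero]

/-- Indecomposability is preserved by shifts. -/
lemma indec_shift {X : C} (hX : Indec X) (n : ℤ) : Indec ((X : C)⟦n⟧) := by
  constructor
  · intro h
    exact hX.1 (isZero_of_isZero_shift n h)
  · rintro A B ⟨iA, iB, pA, pB, h1, h2, h3, h4, h5⟩
    set F := shiftFunctor C (-n)
    set e := (shiftFunctorCompIsoId C n (-n) (add_neg_cancel n)).app X with he
    have hdec : IsDecomp X ((A : C)⟦-n⟧) ((B : C)⟦-n⟧) := by
      refine ⟨F.map iA ≫ e.hom, F.map iB ≫ e.hom, e.inv ≫ F.map pA, e.inv ≫ F.map pB,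
        ?_, ?_, ?_, ?_, ?_⟩
      · rw [Category.assoc, Iso.hom_inv_id_assoc, ← Functor.map_comp, h1, CategoryTheory.Functor.map_id]
      · rw [Category.assoc, Iso.hom_inv_id_assoc, ← Functor.map_comp, h2, CategoryTheory.Functor.map_id]
      · rw [Category.assoc, Iso.hom_inv_id_assoc, ← Functor.map_comp, h3, Functor.map_zero]
      · rw [Category.assoc, Iso.hom_inv_id_assoc, ← Functor.map_comp, h4, Functor.map_zero]
      · have : (e.inv ≫ F.map pA) ≫ F.map iA ≫ e.hom + (e.inv ≫ F.map pB) ≫ F.map iB ≫ e.hom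
            = e.inv ≫ (F.map (pA ≫ iA) + F.map (pB ≫ iB)) ≫ e.hom := by
          simp [Preadditive.comp_add, Preadditive.add_comp, Functor.map_comp, Category.assoc]
        rw [this, ← Functor.map_add, h5, CategoryTheory.Functor.map_id]
        exact (congrArg (e.inv ≫ ·) (Category.id_comp e.hom)).trans e.inv_hom_id
    rcases hX.2 _ _ hdec with hA | hB
    · exact Or.inl (isZero_of_isZero_shift (-n) hA)
    · exact Or.inr (isZero_of_isZero_shift (-n) hB)

/-- The key lemma: for an Auslander-Reiten-type triangle with `End T.obj₁` local, the
connecting morphism `T.mor₃` is killed by shifts of non-sections out of `T.obj₁`. -/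
lemma ar_mor₃_comp_shift_eq_zero {T : Triangle C} (hdist : T ∈ distTriang C)
    (hne : T.mor₃ ≠ 0)
    (hfac : ∀ (Z' : C) (t : Z' ⟶ T.obj₃),
      (¬ ∃ s : T.obj₃ ⟶ Z', s ≫ t = 𝟙 T.obj₃) → ∃ t' : Z' ⟶ T.obj₂, t = t' ≫ T.mor₂)
    (hloc : IsLocalRing (End T.obj₁))
    {W : C} (a : T.obj₁ ⟶ W) (ha : ¬ ∃ p : W ⟶ T.obj₁, a ≫ p = 𝟙 T.obj₁) :
    T.mor₃ ≫ a⟦(1 : ℤ)⟧' = 0 := by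
  by_contra hd
  set δ : T.obj₃ ⟶ W⟦(1 : ℤ)⟧ := T.mor₃ ≫ a⟦(1 : ℤ)⟧' with hδ
  obtain ⟨E, e, q, hD⟩ := distinguished_cocone_triangle₂ δ
  have hq : ¬ ∃ s : T.obj₃ ⟶ E, s ≫ q = 𝟙 T.obj₃ := by
    rintro ⟨s, hs⟩
    apply hd
    have h0 : q ≫ δ = 0 := comp_distTriang_mor_zero₂₃ _ hD
    calc δ = (s ≫ q) ≫ δ := by rw [hs, Category.id_comp]
    _ = 0 := by rw [Category.assoc, h0, Limits.comp_zero]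
  obtain ⟨c, hc⟩ := hfac E q hq
  obtain ⟨α, -, hα⟩ := complete_distinguished_triangle_morphism₁ (Triangle.mk e q δ) T
    hD hdist c (𝟙 _) ((Category.comp_id q).trans hc)
  change δ ≫ α⟦(1 : ℤ)⟧' = 𝟙 T.obj₃ ≫ T.mor₃ at hα
  rw [Category.id_comp] at hα
  have key : T.mor₃ ≫ ((a ≫ α)⟦(1 : ℤ)⟧') = T.mor₃ := by
    exact (congrArg (T.mor₃ ≫ ·) ((shiftFunctor C (1 : ℤ)).map_comp a α)).trans
      ((Category.assoc _ _ _).symm.trans hα)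
  set ε : End T.obj₁ := a ≫ α with hε
  rcases IsLocalRing.isUnit_or_isUnit_of_add_one
      (a := ε) (b := 1 - ε) (add_sub_cancel ε 1) with hu | hu
  · obtain ⟨v, hv⟩ := hu.exists_left_inv
    have hv1 : (a ≫ α) ≫ v = 𝟙 T.obj₁ := hv
    exact ha ⟨α ≫ v, (Category.assoc a α v).symm.trans hv1⟩
  · obtain ⟨v, hv⟩ := hu.exists_left_inv
    have hv1 : (𝟙 T.obj₁ - a ≫ α) ≫ v = 𝟙 T.obj₁ := hv
    apply hne
    have hz : T.mor₃ ≫ ((𝟙 T.obj₁ - a ≫ α)⟦(1 : ℤ)⟧') = 0 := by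
      rw [Functor.map_sub, Preadditive.comp_sub, CategoryTheory.Functor.map_id,
        Category.comp_id, key, sub_self]
    calc T.mor₃ = T.mor₃ ≫ (((𝟙 T.obj₁ - a ≫ α) ≫ v)⟦(1 : ℤ)⟧') := by
          rw [hv1, CategoryTheory.Functor.map_id, Category.comp_id]
    _ = 0 := by rw [Functor.map_comp, ← Category.assoc, hz, Limits.zero_comp]

/-- Every nonzero map out of `X` "divides" an almost-zero map `H`. -/
lemma exists_fac_left {X M : C} (H : X ⟶ M)
    (hii : ∀ (Z' : C) (t' : Z' ⟶ X), (¬ ∃ s : X ⟶ Z', s ≫ t' = 𝟙 X) → t' ≫ H = 0)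
    {Z : C} (u : X ⟶ Z) (hu : u ≠ 0) : ∃ w : Z ⟶ M, H = u ≫ w := by
  obtain ⟨Q, a, b, hT⟩ := distinguished_cocone_triangle u
  have hT₁ := inv_rot_of_distTriang _ hT
  set T₁ := (Triangle.mk u a b).invRotate with hT₁def
  have h12 : T₁.mor₁ ≫ T₁.mor₂ = 0 := comp_distTriang_mor_zero₁₂ _ hT₁
  have hmor₂ : T₁.mor₂ = u := rfl
  have hnr : ¬ ∃ s : X ⟶ T₁.obj₁, s ≫ T₁.mor₁ = 𝟙 X := by
    rintro ⟨s, hs⟩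
    apply hu
    have h' : s ≫ T₁.mor₁ ≫ T₁.mor₂ = 0 := by rw [h12, Limits.comp_zero]
    rw [← Category.assoc, hs] at h'
    exact (Category.id_comp _).symm.trans h'
  have h0 : T₁.mor₁ ≫ H = 0 := hii _ T₁.mor₁ hnr
  obtain ⟨w, hw⟩ := Triangle.yoneda_exact₂ T₁ hT₁ H h0
  exact ⟨w, by rw [hw, hmor₂]; rfl⟩

/-- Every nonzero map into `M` "divides" an almost-zero map `H` on the other side. -/
lemma exists_fac_right {X M : C} (H : X ⟶ M)
    (hiii : ∀ (V : C) (v : M ⟶ V), (¬ ∃ p : V ⟶ M, v ≫ p = 𝟙 M) → H ≫ v = 0)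
    {Z : C} (w : Z ⟶ M) (hw : w ≠ 0) : ∃ u : X ⟶ Z, H = u ≫ w := by
  obtain ⟨Q, c, e, hT⟩ := distinguished_cocone_triangle w
  have hns : ¬ ∃ p : Q ⟶ M, c ≫ p = 𝟙 M := by
    rintro ⟨p, hp⟩
    apply hw
    have h0 : w ≫ c = 0 := comp_distTriang_mor_zero₁₂ _ hT
    calc w = w ≫ c ≫ p := by rw [hp, Category.comp_id]
    _ = 0 := by rw [← Category.assoc, h0, Limits.zero_comp]
  have h0 : H ≫ c = 0 := hiii _ c hns
  obtain ⟨u, hu⟩ := Triangle.coyoneda_exact₂ (Triangle.mk w c e) hT H h0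
  exact ⟨u, hu⟩

/-- Non-sections out of `T.obj₁⟦1⟧` kill the connecting morphism. -/
lemma ar_mor₃_comp_eq_zero_of_not_section {T : Triangle C} (hdist : T ∈ distTriang C)
    (hne : T.mor₃ ≠ 0)
    (hfac : ∀ (Z' : C) (t : Z' ⟶ T.obj₃),
      (¬ ∃ s : T.obj₃ ⟶ Z', s ≫ t = 𝟙 T.obj₃) → ∃ t' : Z' ⟶ T.obj₂, t = t' ≫ T.mor₂)
    (hloc : IsLocalRing (End T.obj₁))
    {V : C} (v : (T.obj₁ : C)⟦(1 : ℤ)⟧ ⟶ V)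
    (hv : ¬ ∃ p : V ⟶ (T.obj₁ : C)⟦(1 : ℤ)⟧, v ≫ p = 𝟙 ((T.obj₁ : C)⟦(1 : ℤ)⟧)) :
    T.mor₃ ≫ v = 0 := by
  set e1 := shiftFunctorCompIsoId C (1 : ℤ) (-1 : ℤ) (by omega) with he1
  set e2 := shiftFunctorCompIsoId C (-1 : ℤ) (1 : ℤ) (by omega) with he2
  set a₀ : T.obj₁ ⟶ (V : C)⟦(-1 : ℤ)⟧ := e1.inv.app T.obj₁ ≫ v⟦(-1 : ℤ)⟧' with ha₀
  have hv' : v = a₀⟦(1 : ℤ)⟧' ≫ e2.hom.app V := by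
    rw [ha₀, Functor.map_comp]
    have hnat : (v⟦(-1 : ℤ)⟧')⟦(1 : ℤ)⟧' ≫ e2.hom.app V
        = e2.hom.app ((T.obj₁ : C)⟦(1 : ℤ)⟧) ≫ v := e2.hom.naturality v
    have hsh : ((e1.inv.app T.obj₁)⟦(1 : ℤ)⟧' : _) = e2.inv.app ((T.obj₁ : C)⟦(1 : ℤ)⟧) := by
      rw [he1, he2]
      exact shift_shiftFunctorCompIsoId_inv_app (1 : ℤ) (-1 : ℤ) (by omega) T.obj₁
    rw [Category.assoc, hnat, hsh, Iso.inv_hom_id_app_assoc]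
  have ha₀ns : ¬ ∃ p : (V : C)⟦(-1 : ℤ)⟧ ⟶ T.obj₁, a₀ ≫ p = 𝟙 T.obj₁ := by
    rintro ⟨p, hp⟩
    refine hv ⟨e2.inv.app V ≫ p⟦(1 : ℤ)⟧', ?_⟩
    rw [hv', Category.assoc, Iso.hom_inv_id_app_assoc, ← Functor.map_comp, hp,
      CategoryTheory.Functor.map_id]
  have h0 : T.mor₃ ≫ a₀⟦(1 : ℤ)⟧' = 0 :=
    ar_mor₃_comp_shift_eq_zero hdist hne hfac hloc a₀ ha₀ns
  rw [hv', ← Category.assoc, h0, Limits.zero_comp]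

end AuxLemmas

section LinearAux

set_option linter.unusedSectionVars false

variable {k : Type u} [Field k]
variable {C : Type u} [Category.{v} C] [Preadditive C] [Linear k C]
  [HasZeroObject C] [HasShift C ℤ] [∀ n : ℤ, (shiftFunctor C n).Additive]
  [Pretriangulated C]

/-- The pairing `(u, w) ↦ t (u ≫ w)` as a bilinear map. -/
def cyPairing {X M : C} (t : Module.Dual k (X ⟶ M)) (Z : C) :
    (X ⟶ Z) →ₗ[k] Module.Dual k (Z ⟶ M) :=
  LinearMap.mk₂ k (fun u w => t (u ≫ w))
    (fun u u' w => by simp [Preadditive.add_comp])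
    (fun c u w => by simp [Linear.smul_comp])
    (fun u w w' => by simp [Preadditive.comp_add])
    (fun c u w => by simp [Linear.comp_smul])

@[simp] lemma cyPairing_apply {X M : C} (t : Module.Dual k (X ⟶ M)) (Z : C)
    (u : X ⟶ Z) (w : Z ⟶ M) : cyPairing t Z u w = t (u ≫ w) := rfl

/-- If the pairing `t (u ≫ w)` is nondegenerate on both sides, we get a CY structure. -/
lemma isCY_of_pairing [∀ A B : C, FiniteDimensional k (A ⟶ B)] (d : ℤ) (X : C)
    (hnz : ¬ IsZero X) (t : Module.Dual k (X ⟶ (X : C)⟦d⟧))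
    (hl : ∀ (Z : C) (u : X ⟶ Z), u ≠ 0 → ∃ w : Z ⟶ (X : C)⟦d⟧, t (u ≫ w) ≠ 0)
    (hr : ∀ (Z : C) (w : Z ⟶ (X : C)⟦d⟧), w ≠ 0 → ∃ u : X ⟶ Z, t (u ≫ w) ≠ 0) :
    IsCYObj k C d X := by
  have hinjL : ∀ Z : C, Function.Injective (cyPairing t Z) := by
    intro Z
    apply (injective_iff_map_eq_zero _).mpr
    intro u hu
    by_contra h0
    obtain ⟨w, hw⟩ := hl Z u h0
    apply hw
    calc t (u ≫ w) = (cyPairing t Z u) w := rfl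
    _ = (0 : Module.Dual k (Z ⟶ (X : C)⟦d⟧)) w := by rw [hu]
    _ = 0 := rfl
  have hinjR : ∀ Z : C, Function.Injective (cyPairing t Z).flip := by
    intro Z
    apply (injective_iff_map_eq_zero _).mpr
    intro w hw
    by_contra h0
    obtain ⟨u, hu⟩ := hr Z w h0
    apply hu
    calc t (u ≫ w) = ((cyPairing t Z).flip w) u := rfl
    _ = (0 : Module.Dual k (X ⟶ Z)) u := by rw [hw]
    _ = 0 := rfl
  have hrank : ∀ Z : C,
      Module.finrank k (X ⟶ Z) = Module.finrank k (Module.Dual k (Z ⟶ (X : C)⟦d⟧)) := by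
    intro Z
    have h1 := LinearMap.finrank_le_finrank_of_injective (hinjL Z)
    have h2 := LinearMap.finrank_le_finrank_of_injective (hinjR Z)
    have e1 : Module.finrank k (Module.Dual k (Z ⟶ (X : C)⟦d⟧))
        = Module.finrank k (Z ⟶ (X : C)⟦d⟧) := Subspace.dual_finrank_eq
    have e2 : Module.finrank k (Module.Dual k (X ⟶ Z))
        = Module.finrank k (X ⟶ Z) := Subspace.dual_finrank_eq
    rw [e1]
    rw [e1] at h1
    rw [e2] at h2
    exact le_antisymm h1 h2
  refine ⟨hnz, fun Z => LinearEquiv.ofBijective (cyPairing t Z)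
    ⟨hinjL Z, (LinearMap.injective_iff_surjective_of_finrank_eq_finrank (hrank Z)).mp
      (hinjL Z)⟩, ?_⟩
  intro Z W f u w
  show cyPairing t W (u ≫ f) w = cyPairing t Z u (f ≫ w)
  rw [cyPairing_apply, cyPairing_apply, Category.assoc]

end LinearAux

section EndAux

set_option linter.unusedSectionVars false

variable {C : Type u} [Category.{v} C] [Preadditive C]
  [HasZeroObject C] [HasShift C ℤ] [∀ n : ℤ, (shiftFunctor C n).Additive]
  [Pretriangulated C]

/-- In a local endomorphism ring, one of the two summands of the identity is invertible. -/
lemma end_isUnit_add {X : C} (hloc : IsLocalRing (End X)) {a b : X ⟶ X}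
    (h : a + b = 𝟙 X) :
    (∃ v : X ⟶ X, a ≫ v = 𝟙 X ∧ v ≫ a = 𝟙 X) ∨
      (∃ v : X ⟶ X, b ≫ v = 𝟙 X ∧ v ≫ b = 𝟙 X) := by
  have h' : @Eq (End X) (a + b) 1 := h
  rcases IsLocalRing.isUnit_or_isUnit_of_add_one h' with hu | hu
  · obtain ⟨u, hu⟩ := hu
    left
    refine ⟨(↑u⁻¹ : End X), ?_, ?_⟩
    · rw [← hu]; exact u.inv_mul
    · rw [← hu]; exact u.mul_inv
  · obtain ⟨u, hu⟩ := hu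
    right
    refine ⟨(↑u⁻¹ : End X), ?_, ?_⟩
    · rw [← hu]; exact u.inv_mul
    · rw [← hu]; exact u.mul_inv

/-- If `a ≫ v` and `v` are invertible, then so is `a`. -/
lemma end_unit_transfer {X : C} {a v : X ⟶ X}
    (hav : ∃ w : X ⟶ X, (a ≫ v) ≫ w = 𝟙 X ∧ w ≫ (a ≫ v) = 𝟙 X)
    (hv : ∃ w : X ⟶ X, v ≫ w = 𝟙 X ∧ w ≫ v = 𝟙 X) :
    ∃ w : X ⟶ X, a ≫ w = 𝟙 X ∧ w ≫ a = 𝟙 X := by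
  obtain ⟨w, hw1, hw2⟩ := hav
  obtain ⟨w', hw1', hw2'⟩ := hv
  refine ⟨v ≫ w, by rw [← Category.assoc]; exact hw1, ?_⟩
  have h4 : ∀ (f : X ⟶ X), w ≫ a ≫ v ≫ f = f := fun f => by
    rw [← Category.assoc, ← Category.assoc,
      show (w ≫ a) ≫ v = 𝟙 X from by rw [Category.assoc]; exact hw2, Category.id_comp]
  calc (v ≫ w) ≫ a = v ≫ w ≫ a ≫ v ≫ w' := by
        simp only [Category.assoc, hw1', Category.comp_id]
  _ = v ≫ w' := by rw [h4]
  _ = 𝟙 X := hw1'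

end EndAux

/-- **Statement 3** (Theorem 3.2, first part). Let `𝒜` be a Hom-finite Krull-Schmidt
triangulated `k`-category and `X` an indecomposable object. Then `X` is a `d`-th
Calabi-Yau object if and only if there exists an Auslander-Reiten triangle of the
form `X⟦d-1⟧ → Y → X → X⟦d⟧`. -/
theorem stmt_3 (k : Type u) [Field k] (C : Type u) [Category.{v} C] [Preadditive C]
    [Linear k C] [HasZeroObject C] [HasShift C ℤ]
    [∀ n : ℤ, (shiftFunctor C n).Additive] [Pretriangulated C]
    [∀ X Y : C, FiniteDimensional k (X ⟶ Y)]
    (hKS : KrullSchmidt C)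
    (d : ℤ) (X : C) (hX : Indec X) :
    IsCYObj k C d X ↔
      ∃ (Y : C) (f : X⟦d - 1⟧ ⟶ Y) (g : Y ⟶ X) (h : X ⟶ X⟦d - 1⟧⟦(1 : ℤ)⟧),
        IsARTriangle (Triangle.mk f g h) := by
  constructor
  · -- Forward direction: CY structure gives an AR triangle.
    rintro ⟨hnz, η, hnat⟩
    have hloc := hKS X hX
    set t : Module.Dual k (X ⟶ (X : C)⟦d⟧) := η X (𝟙 X) with ht
    have hpair : ∀ {Z : C} (u : X ⟶ Z) (w : Z ⟶ (X : C)⟦d⟧), (η Z) u w = t (u ≫ w) := by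
      intro Z u w
      have := hnat u (𝟙 X) w
      rwa [Category.id_comp] at this
    have hright : ∀ {Z : C} (w : Z ⟶ (X : C)⟦d⟧),
        (∀ u : X ⟶ Z, t (u ≫ w) = 0) → w = 0 := by
      intro Z w hw
      rw [← Module.forall_dual_apply_eq_zero_iff k w]
      intro φ
      obtain ⟨u, rfl⟩ := (η Z).surjective φ
      rw [hpair u w]
      exact hw u
    have hid : (𝟙 X : X ⟶ X) ≠ 0 := by
      intro h0
      exact hX.1 ((IsZero.iff_id_eq_zero X).mpr h0)
    -- The submodule of non-invertible endomorphisms.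
    set N : Submodule k (X ⟶ X) :=
      { carrier := {e : X ⟶ X | ¬ ∃ v : X ⟶ X, e ≫ v = 𝟙 X ∧ v ≫ e = 𝟙 X}
        add_mem' := by
          intro x y hx hy
          rintro ⟨v, hv1, hv2⟩
          have hsum : (x ≫ v) + (y ≫ v) = 𝟙 X := by
            rw [← Preadditive.add_comp]; exact hv1
          have hvinv : ∃ w : X ⟶ X, v ≫ w = 𝟙 X ∧ w ≫ v = 𝟙 X := ⟨x + y, hv2, hv1⟩
          rcases end_isUnit_add hloc hsum with hu | hu
          · exact hx (end_unit_transfer hu hvinv)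
          · exact hy (end_unit_transfer hu hvinv)
        zero_mem' := by
          rintro ⟨v, hv1, hv2⟩
          rw [Limits.zero_comp] at hv1
          exact hid hv1.symm
        smul_mem' := by
          intro c x hx
          rintro ⟨v, hv1, hv2⟩
          apply hx
          refine ⟨c • v, ?_, ?_⟩
          · rw [Linear.comp_smul, ← Linear.smul_comp]; exact hv1
          · rw [Linear.smul_comp, ← Linear.comp_smul]; exact hv2 } with hN
    have hNtop : N ≠ ⊤ := by
      intro htop
      have hmem : 𝟙 X ∈ N := htop ▸ Submodule.mem_top
      exact hmem ⟨𝟙 X, Category.id_comp _, Category.id_comp _⟩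
    -- The annihilator of N under the pairing is nonzero.
    set Wsub : Submodule k (X ⟶ (X : C)⟦d⟧) :=
      { carrier := {w : X ⟶ (X : C)⟦d⟧ | ∀ e : X ⟶ X, e ∈ N → t (e ≫ w) = 0}
        add_mem' := by
          intro x y hx hy e he
          rw [Preadditive.comp_add, map_add, hx e he, hy e he, add_zero]
        zero_mem' := by
          intro e he
          rw [Limits.comp_zero, map_zero]
        smul_mem' := by
          intro c x hx e he
          rw [Linear.comp_smul, map_smul, hx e he, smul_zero] } with hW
    have hWne : Wsub ≠ ⊥ := by
      intro hbot
      have hΦinj : Function.Injective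
          ((Submodule.subtype N).dualMap.comp (cyPairing t X).flip) := by
        rw [← LinearMap.ker_eq_bot]
        apply (Submodule.eq_bot_iff _).mpr
        intro w hw
        rw [LinearMap.mem_ker] at hw
        have hwW : w ∈ Wsub := by
          intro e he
          have := DFunLike.congr_fun hw (⟨e, he⟩ : N)
          simpa using this
        rw [hbot] at hwW
        simpa using hwW
      have c1 : Module.finrank k (X ⟶ (X : C)⟦d⟧) ≤ Module.finrank k (Module.Dual k N) :=
        LinearMap.finrank_le_finrank_of_injective hΦinj
      have c2 : Module.finrank k (Module.Dual k N) = Module.finrank k N :=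
        Subspace.dual_finrank_eq
      have c3 : Module.finrank k N < Module.finrank k (X ⟶ X) :=
        Submodule.finrank_lt hNtop
      have c4 : Module.finrank k (X ⟶ X)
          = Module.finrank k (Module.Dual k (X ⟶ (X : C)⟦d⟧)) :=
        LinearEquiv.finrank_eq (η X)
      have c5 : Module.finrank k (Module.Dual k (X ⟶ (X : C)⟦d⟧))
          = Module.finrank k (X ⟶ (X : C)⟦d⟧) := Subspace.dual_finrank_eq
      omega
    obtain ⟨h, hhW, hh0⟩ := (Submodule.ne_bot_iff Wsub).mp hWne
    -- Build the triangle on the morphism `h`.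
    set ι := shiftFunctorAdd' C (d - 1) 1 d (by ring) with hι
    set h₀ : X ⟶ ((X : C)⟦d - 1⟧)⟦(1 : ℤ)⟧ := h ≫ ι.hom.app X with hh₀
    obtain ⟨Y, f, g, hT⟩ := distinguished_cocone_triangle₂ h₀
    refine ⟨Y, f, g, h₀, hT, indec_shift hX (d - 1), hX, ?_, ?_⟩
    · -- mor₃ ≠ 0
      intro h0
      apply hh0
      have hrec : h = h₀ ≫ ι.inv.app X := by
        rw [hh₀, Category.assoc, Iso.hom_inv_id_app, Category.comp_id]
      rw [hrec]
      have h0' : h₀ = 0 := h0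
      rw [h0', Limits.zero_comp]
    · -- right almost split
      intro Z' t' hnr
      have hth : t' ≫ h = 0 := by
        apply hright
        intro u
        refine (congrArg t (Category.assoc u t' h).symm).trans ?_
        have hmem : (u ≫ t' : X ⟶ X) ∈ N := by
          rintro ⟨v, hv1, hv2⟩
          exact hnr ⟨v ≫ u, (Category.assoc v u t').trans hv2⟩
        exact hhW _ hmem
      have hth₀ : t' ≫ h₀ = 0 := by
        rw [hh₀]
        exact (Category.assoc t' h _).symm.trans
          ((congrArg (fun x => x ≫ ι.hom.app X) hth).trans Limits.zero_comp)
      obtain ⟨t'', ht''⟩ := Triangle.coyoneda_exact₃ _ hT t' hth₀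
      exact ⟨t'', ht''⟩
  · -- Backward direction: an AR triangle gives a CY structure.
    rintro ⟨Y, f, g, h, hdist, hind1, -, hne, hfac⟩
    have hloc1 : IsLocalRing (End ((X : C)⟦d - 1⟧)) := hKS _ (indec_shift hX (d - 1))
    set ι := shiftFunctorAdd' C (d - 1) 1 d (by ring) with hι
    set H : X ⟶ (X : C)⟦d⟧ := h ≫ ι.inv.app X with hH
    have hHne : H ≠ 0 := by
      intro h0
      apply hne
      show h = 0
      have hrec : h = H ≫ ι.hom.app X := by
        rw [hH, Category.assoc, Iso.inv_hom_id_app]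
        simp
      rw [hrec, h0, Limits.zero_comp]
    have hii : ∀ (Z' : C) (t' : Z' ⟶ X), (¬ ∃ s : X ⟶ Z', s ≫ t' = 𝟙 X) → t' ≫ H = 0 := by
      intro Z' t' hnr
      obtain ⟨t'', ht''⟩ := hfac Z' t' hnr
      have hgh : g ≫ h = 0 := comp_distTriang_mor_zero₂₃ _ hdist
      calc t' ≫ H = t'' ≫ (g ≫ h) ≫ ι.inv.app X := by
            rw [ht'', hH]
            exact (Category.assoc _ _ _).trans (congrArg (t'' ≫ ·) (Category.assoc _ _ _).symm)
      _ = 0 := (congrArg (fun x => t'' ≫ x ≫ ι.inv.app X) hgh).trans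
            ((congrArg (t'' ≫ ·) Limits.zero_comp).trans Limits.comp_zero)
    have hiii : ∀ (V : C) (v : (X : C)⟦d⟧ ⟶ V),
        (¬ ∃ p : V ⟶ (X : C)⟦d⟧, v ≫ p = 𝟙 ((X : C)⟦d⟧)) → H ≫ v = 0 := by
      intro V v hns
      have hvs : ¬ ∃ q : V ⟶ ((X : C)⟦d - 1⟧)⟦(1 : ℤ)⟧,
          (ι.inv.app X ≫ v) ≫ q = 𝟙 (((X : C)⟦d - 1⟧)⟦(1 : ℤ)⟧) := by
        rintro ⟨q, hq⟩
        apply hns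
        refine ⟨q ≫ ι.inv.app X, ?_⟩
        rw [Category.assoc] at hq
        have h1 : v ≫ q = ι.hom.app X := by
          calc v ≫ q = ι.hom.app X ≫ ι.inv.app X ≫ v ≫ q := by
                rw [Iso.hom_inv_id_app_assoc]
          _ = ι.hom.app X := by rw [hq]; simp
        rw [← Category.assoc, h1, Iso.hom_inv_id_app]
      have hz := ar_mor₃_comp_eq_zero_of_not_section (T := Triangle.mk f g h)
        hdist hne hfac hloc1 (ι.inv.app X ≫ v) hvs
      rw [hH, Category.assoc]
      exact hz
    have hex : ∃ t : Module.Dual k (X ⟶ (X : C)⟦d⟧), t H ≠ 0 := by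
      by_contra hc
      push_neg at hc
      exact hHne ((Module.forall_dual_apply_eq_zero_iff k H).mp hc)
    obtain ⟨t, htH⟩ := hex
    apply isCY_of_pairing d X hX.1 t
    · intro Z u hu
      obtain ⟨w, hw⟩ := exists_fac_left H hii u hu
      exact ⟨w, by rw [← hw]; exact htH⟩
    · intro Z w hw
      obtain ⟨u, hu⟩ := exists_fac_right H hiii w hw
      exact ⟨u, by rw [← hu]; exact htH⟩
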